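/- arXiv:1209.0604 — 3 statements merged into one kernel-verified Lean document; each statement's English description precedes it below -/
import Mathlib

section
/- For every integer m >= 2, 2 * sum_{k=1}^infty zeta(m, k)/k = (m+2) * zeta(m+1) - sum_{n=1}^{m-2} zeta(m-n) * zeta(n+1), where zeta(m, k) = sum_{j=0}^infty 1/(j+k)^m is the Hurwitz zeta function and the empty sum is zero. -/
open scoped BigOperators

noncomputable def H (n : ℕ) : ℝ := ∑ k ∈ Finset.range n, (1 : ℝ) / (k + 1)

noncomputable def h : ℕ → ℕ → ℝ
  | 0, n => 1 / n
  | r + 1, n => ∑ k ∈ Finset.range n, h r (k + 1)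

noncomputable def zeta (m : ℕ) : ℝ := ∑' n : ℕ, (1 : ℝ) / ((n : ℝ) + 1) ^ m

noncomputable def hzeta (m k : ℕ) : ℝ := ∑' j : ℕ, (1 : ℝ) / ((j : ℝ) + k) ^ m

noncomputable def zetaH (m : ℕ) : ℝ := ∑' n : ℕ, H (n + 1) / ((n : ℝ) + 1) ^ m

def stirling1 : ℕ → ℕ → ℕ
  | 0, 0 => 1
  | 0, _ + 1 => 0
  | _ + 1, 0 => 0
  | n + 1, k + 1 => stirling1 n k + n * stirling1 n (k + 1)

open ENNReal Finset Filter
open scoped Topology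

/-! ### Auxiliary definitions (ℝ≥0∞-valued sums) -/

noncomputable def zE (s : ℕ) : ℝ≥0∞ := ∑' n : ℕ, ENNReal.ofReal (1 / ((n:ℝ)+1)^s)
noncomputable def Zp (p q : ℕ) : ℝ≥0∞ :=
  ∑' x : ℕ × ℕ, ENNReal.ofReal (1 / (((x.1:ℝ)+1)^q * ((x.1:ℝ)+(x.2:ℝ)+2)^p))
noncomputable def Wp (a b : ℕ) : ℝ≥0∞ :=
  ∑' x : ℕ × ℕ, ENNReal.ofReal (1 / (((x.1:ℝ)+1)^a * ((x.2:ℝ)+1) * ((x.1:ℝ)+(x.2:ℝ)+2)^b))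
noncomputable def Lp (m : ℕ) : ℝ≥0∞ :=
  ∑' x : ℕ × ℕ, ENNReal.ofReal (1 / (((x.1:ℝ)+1) * ((x.1:ℝ)+(x.2:ℝ)+1)^m))
noncomputable def ZH (m : ℕ) : ℝ≥0∞ := ∑' n : ℕ, ENNReal.ofReal (H (n+1) / ((n:ℝ)+1)^m)

/-! ### Real partial-fraction and telescoping lemmas -/

lemma pf1 (a b : ℕ) (J K N : ℝ) (hJ : 0 < J) (hK : 0 < K) (hN : N = J + K) :
    1 / (J^(a+1) * K * N^b) = 1 / (J^a * K * N^(b+1)) + 1 / (J^(a+1) * N^(b+1)) := by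
  subst hN
  have hh : 0 < J + K := by linarith
  field_simp
  ring

lemma H_shift (n N : ℕ) : H (n + N) = H n + ∑ k ∈ range N, (1:ℝ)/((n:ℝ)+(k:ℝ)+1) := by
  have := Finset.sum_range_add (fun i : ℕ => (1:ℝ) / ((i:ℝ) + 1)) n N
  unfold H
  rw [this]
  congr 1
  refine Finset.sum_congr rfl fun k _ => ?_
  push_cast
  ring_nf

lemma tail_small (j : ℕ) : Tendsto (fun N : ℕ => H (N+(j+1)) - H N) atTop (𝓝 0) := by
  have hb : ∀ N : ℕ, H (N+(j+1)) - H N = ∑ k ∈ range (j+1), (1:ℝ)/((N:ℝ)+(k:ℝ)+1) := by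
    intro N; rw [H_shift N (j+1)]; ring
  refine squeeze_zero (fun N => ?_) (fun N => ?_) (g := fun N : ℕ => ((j:ℝ)+1) * (1/((N:ℝ)+1))) ?_
  · rw [hb]; positivity
  · rw [hb]
    calc ∑ k ∈ range (j+1), (1:ℝ)/((N:ℝ)+(k:ℝ)+1)
        ≤ ∑ k ∈ range (j+1), (1:ℝ)/((N:ℝ)+1) := by
          refine Finset.sum_le_sum fun k _ => ?_
          apply one_div_le_one_div_of_le (by positivity)
          have : (0:ℝ) ≤ (k:ℝ) := Nat.cast_nonneg k
          linarith
      _ = ((j:ℝ)+1) * (1/((N:ℝ)+1)) := by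
          rw [Finset.sum_const, card_range]; push_cast; ring
  · simpa using (tendsto_one_div_add_atTop_nhds_zero_nat).const_mul ((j:ℝ)+1)

lemma inner_hasSum (j : ℕ) :
    HasSum (fun k : ℕ => 1 / (((k:ℝ)+1) * ((j:ℝ)+(k:ℝ)+2))) (H (j+1) / ((j:ℝ)+1)) := by
  have hj : (0:ℝ) < (j:ℝ)+1 := by positivity
  rw [hasSum_iff_tendsto_nat_of_nonneg (fun k => by positivity)]
  have key : ∀ N : ℕ, ∑ k ∈ range N, 1 / (((k:ℝ)+1) * ((j:ℝ)+(k:ℝ)+2))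
      = (1/((j:ℝ)+1)) * (H (j+1) - (H (N+(j+1)) - H N)) := by
    intro N
    have e1 : ∑ k ∈ range N, 1 / (((k:ℝ)+1) * ((j:ℝ)+(k:ℝ)+2))
        = ∑ k ∈ range N, (1/((j:ℝ)+1)) * (1/((k:ℝ)+1) - 1/((j:ℝ)+(k:ℝ)+2)) := by
      refine Finset.sum_congr rfl fun k _ => ?_
      have hk : (0:ℝ) < (k:ℝ)+1 := by positivity
      have hjk : (0:ℝ) < (j:ℝ)+(k:ℝ)+2 := by positivity
      field_simp
      ring
    rw [e1, ← Finset.mul_sum, Finset.sum_sub_distrib]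
    have e2 : ∑ k ∈ range N, (1:ℝ)/((k:ℝ)+1) = H N := by
      unfold H; exact Finset.sum_congr rfl fun k _ => by norm_num
    have e3 : ∑ k ∈ range N, (1:ℝ)/((j:ℝ)+(k:ℝ)+2) = H ((j+1) + N) - H (j+1) := by
      rw [H_shift (j+1) N, add_sub_cancel_left]
      refine Finset.sum_congr rfl fun k _ => ?_
      push_cast
      ring_nf
    rw [e2, e3, show (j+1) + N = N + (j+1) by omega]
    ring
  simp only [key]
  have := ((tendsto_const_nhds (x := H (j+1))).sub (tail_small j)).const_mul (1/((j:ℝ)+1))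
  simp only [sub_zero] at this
  rw [show H (j+1) / ((j:ℝ)+1) = (1/((j:ℝ)+1)) * H (j+1) by ring]
  exact this

lemma tele2 (j : ℕ) :
    HasSum (fun k : ℕ => 1/(((j:ℝ)+(k:ℝ)+1) * ((j:ℝ)+(k:ℝ)+2))) (1/((j:ℝ)+1)) := by
  have hj : (0:ℝ) < (j:ℝ)+1 := by positivity
  rw [hasSum_iff_tendsto_nat_of_nonneg (fun k => by positivity)]
  have key : ∀ N : ℕ, ∑ k ∈ range N, 1/(((j:ℝ)+(k:ℝ)+1) * ((j:ℝ)+(k:ℝ)+2))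
      = 1/((j:ℝ)+1) - 1/((j:ℝ)+(N:ℝ)+1) := by
    intro N
    have e1 : ∑ k ∈ range N, 1/(((j:ℝ)+(k:ℝ)+1) * ((j:ℝ)+(k:ℝ)+2))
        = ∑ k ∈ range N, ((fun i : ℕ => 1/((j:ℝ)+(i:ℝ)+1)) k - (fun i : ℕ => 1/((j:ℝ)+(i:ℝ)+1)) (k+1)) := by
      refine Finset.sum_congr rfl fun k _ => ?_
      have h1 : (0:ℝ) < (j:ℝ)+(k:ℝ)+1 := by positivity
      have h2 : (0:ℝ) < (j:ℝ)+(k:ℝ)+2 := by positivity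
      have hdiff : 1/((j:ℝ)+(k:ℝ)+1) - 1/((j:ℝ)+(k:ℝ)+2)
          = 1/(((j:ℝ)+(k:ℝ)+1) * ((j:ℝ)+(k:ℝ)+2)) := by
        rw [div_sub_div _ _ h1.ne' h2.ne', one_mul, mul_one,
          show ((j:ℝ)+(k:ℝ)+2) - ((j:ℝ)+(k:ℝ)+1) = 1 by ring]
      push_cast
      rw [show ((j:ℝ)+((k:ℝ)+1)+1) = (j:ℝ)+(k:ℝ)+2 by ring, hdiff]
    rw [e1, Finset.sum_range_sub' (fun i : ℕ => 1/((j:ℝ)+(i:ℝ)+1)) N]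
    norm_num
  simp only [key]
  have hz : Tendsto (fun N : ℕ => 1/((j:ℝ)+(N:ℝ)+1)) atTop (𝓝 0) := by
    refine squeeze_zero (fun N => by positivity) (fun N => ?_) tendsto_one_div_add_atTop_nhds_zero_nat
    apply one_div_le_one_div_of_le (by positivity)
    have : (0:ℝ) ≤ (j:ℝ) := Nat.cast_nonneg j
    linarith
  simpa using (tendsto_const_nhds (x := 1/((j:ℝ)+1))).sub hz

/-! ### Summability of zeta-type series -/

lemma summable_sz (s : ℕ) (hs : 2 ≤ s) : Summable (fun n : ℕ => 1/((n:ℝ)+1)^s) := by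
  have h1 : Summable (fun n : ℕ => 1/(n:ℝ)^s) :=
    Real.summable_one_div_nat_pow.mpr (by omega)
  have h2 := (summable_nat_add_iff 1).mpr h1
  refine h2.congr fun n => ?_
  push_cast
  ring_nf

lemma summable_shift (c s : ℕ) (hs : 2 ≤ s) :
    Summable (fun j : ℕ => 1/((j:ℝ)+(c:ℝ)+1)^s) := by
  have h2 := (summable_nat_add_iff c).mpr (summable_sz s hs)
  refine h2.congr fun n => ?_
  push_cast
  ring_nf

/-! ### ℝ≥0∞ identities -/

lemma Wp_rec (a b : ℕ) : Wp (a+1) b = Wp a (b+1) + Zp (b+1) (a+1) := by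
  unfold Wp Zp
  rw [← ENNReal.tsum_add]
  refine tsum_congr fun x => ?_
  have h1 : (0:ℝ) < (x.1:ℝ)+1 := by positivity
  have h2 : (0:ℝ) < (x.2:ℝ)+1 := by positivity
  rw [← ENNReal.ofReal_add (by positivity) (by positivity)]
  exact congrArg ENNReal.ofReal (pf1 a b _ _ _ h1 h2 (by ring))

lemma Wp_tele (M : ℕ) : ∀ t, t ≤ M →
    Wp (t+1) (M+1-t) = Wp 1 (M+1) + ∑ a ∈ Icc 1 t, Zp (M+2-a) (a+1) := by
  intro t
  induction t with
  | zero => intro _; simp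
  | succ t ih =>
    intro ht
    have ht' : t ≤ M := by omega
    have e1 : M+1-(t+1) = M-t := by omega
    have e2 : (M-t)+1 = M+1-t := by omega
    rw [e1, show t+1+1 = (t+1)+1 from rfl, Wp_rec (t+1) (M-t), e2, ih ht',
      Finset.sum_Icc_succ_top (by omega : 1 ≤ t+1)]
    rw [show M+2-(t+1) = M+1-t by omega]
    ring

lemma Wp_split (c : ℕ) : Wp 1 (c+1) = 2 * Zp (c+2) 1 := by
  have key : Wp 1 (c+1) = (∑' x : ℕ × ℕ, ENNReal.ofReal (1 / (((x.2:ℝ)+1) * ((x.1:ℝ)+(x.2:ℝ)+2)^(c+2))))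
      + Zp (c+2) 1 := by
    unfold Wp Zp
    rw [← ENNReal.tsum_add]
    refine tsum_congr fun x => ?_
    have h1 : (0:ℝ) < (x.1:ℝ)+1 := by positivity
    have h2 : (0:ℝ) < (x.2:ℝ)+1 := by positivity
    rw [← ENNReal.ofReal_add (by positivity) (by positivity)]
    refine congrArg ENNReal.ofReal ?_
    have := pf1 0 (c+1) _ _ _ h1 h2 (show (x.1:ℝ)+(x.2:ℝ)+2 = ((x.1:ℝ)+1) + ((x.2:ℝ)+1) by ring)
    simpa using this
  have swap : (∑' x : ℕ × ℕ, ENNReal.ofReal (1 / (((x.2:ℝ)+1) * ((x.1:ℝ)+(x.2:ℝ)+2)^(c+2))))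
      = Zp (c+2) 1 := by
    unfold Zp
    rw [← (Equiv.prodComm ℕ ℕ).tsum_eq
      (fun x : ℕ × ℕ => ENNReal.ofReal (1 / (((x.1:ℝ)+1)^1 * ((x.1:ℝ)+(x.2:ℝ)+2)^(c+2))))]
    refine tsum_congr fun x => congrArg ENNReal.ofReal ?_
    simp only [Equiv.prodComm_apply, Prod.fst_swap, Prod.snd_swap]
    ring_nf
  rw [key, swap]
  ring

lemma Wp_eq_ZH (c : ℕ) : Wp (c+1) 1 = ZH (c+2) := by
  unfold Wp ZH
  rw [ENNReal.tsum_prod']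
  refine tsum_congr fun j => ?_
  have hj : (0:ℝ) < (j:ℝ)+1 := by positivity
  have hs := (inner_hasSum j).mul_left (1/((j:ℝ)+1)^(c+1))
  calc ∑' k : ℕ, ENNReal.ofReal (1 / (((j:ℝ)+1)^(c+1) * ((k:ℝ)+1) * ((j:ℝ)+(k:ℝ)+2)^1))
      = ∑' k : ℕ, ENNReal.ofReal ((1/((j:ℝ)+1)^(c+1)) * (1 / (((k:ℝ)+1) * ((j:ℝ)+(k:ℝ)+2)))) := by
        refine tsum_congr fun k => congrArg ENNReal.ofReal ?_
        have hk : (0:ℝ) < (k:ℝ)+1 := by positivity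
        have hjk : (0:ℝ) < (j:ℝ)+(k:ℝ)+2 := by positivity
        field_simp
    _ = ENNReal.ofReal ((1/((j:ℝ)+1)^(c+1)) * (H (j+1)/((j:ℝ)+1))) := by
        rw [← hs.tsum_eq]
        exact (ENNReal.ofReal_tsum_of_nonneg (fun k => by positivity) hs.summable).symm
    _ = ENNReal.ofReal (H (j+1) / ((j:ℝ)+1)^(c+2)) := by
        refine congrArg _ ?_
        rw [div_mul_div_comm, one_mul, show ((j:ℝ)+1)^(c+1) * ((j:ℝ)+1) = ((j:ℝ)+1)^(c+2) by ring]

set_option maxHeartbeats 1000000 in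
lemma Lp_eq_ZH (m : ℕ) : Lp m = ZH m := by
  unfold Lp ZH
  rw [← Finset.HasAntidiagonal.sigmaAntidiagonalEquivProd.tsum_eq
    (fun x : ℕ × ℕ => ENNReal.ofReal (1 / (((x.1:ℝ)+1) * ((x.1:ℝ)+(x.2:ℝ)+1)^m))),
    ENNReal.tsum_sigma']
  refine tsum_congr fun n => ?_
  simp only [Finset.HasAntidiagonal.sigmaAntidiagonalEquivProd_apply]
  rw [Finset.tsum_subtype (Finset.HasAntidiagonal.antidiagonal n)
    (fun p : ℕ × ℕ => ENNReal.ofReal (1 / (((p.1:ℝ)+1) * (((p.1:ℝ)+(p.2:ℝ)+1))^m)))]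
  have e1 : ∀ p ∈ Finset.HasAntidiagonal.antidiagonal n,
      ENNReal.ofReal (1 / (((p.1:ℝ)+1) * (((p.1:ℝ)+(p.2:ℝ)+1))^m))
      = ENNReal.ofReal (1 / (((p.1:ℝ)+1) * (((n:ℝ)+1))^m)) := by
    rintro ⟨a,b⟩ hp
    rw [Finset.HasAntidiagonal.mem_antidiagonal] at hp
    have : ((a:ℝ)+(b:ℝ)+1) = (n:ℝ)+1 := by
      push_cast [← hp]; ring
    simp only [this]
  rw [Finset.sum_congr rfl e1, Finset.Nat.sum_antidiagonal_eq_sum_range_succ_mk]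
  have hn : (0:ℝ) < (n:ℝ)+1 := by positivity
  have e2 : ∀ i ∈ range (n+1),
      ENNReal.ofReal (1 / (((i:ℝ)+1) * ((n:ℝ)+1)^m)) = ENNReal.ofReal ((1/((i:ℝ)+1)) * (1/((n:ℝ)+1)^m)) := by
    intro i _
    refine congrArg _ ?_
    rw [one_div_mul_one_div]
  rw [Finset.sum_congr rfl e2, ← ENNReal.ofReal_sum_of_nonneg (fun i _ => by positivity),
    ← Finset.sum_mul]
  refine congrArg _ ?_
  rw [show (∑ i ∈ range (n+1), 1/((i:ℝ)+1)) = H (n+1) from ?_]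
  · ring
  · unfold H
    exact Finset.sum_congr rfl fun k _ => by norm_num

lemma Lp_split (m : ℕ) : Lp m = zE (m+1) + Zp m 1 := by
  unfold Lp zE Zp
  rw [ENNReal.tsum_prod', ENNReal.tsum_prod', ← ENNReal.tsum_add]
  refine tsum_congr fun k => ?_
  rw [tsum_eq_zero_add' ENNReal.summable]
  congr 1
  · refine congrArg ENNReal.ofReal ?_
    push_cast
    rw [show ((k:ℝ)+((0:ℝ))+1) = (k:ℝ)+1 by ring,
      show ((k:ℝ)+1) * ((k:ℝ)+1)^m = ((k:ℝ)+1)^(m+1) by ring]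
  · refine tsum_congr fun j => congrArg ENNReal.ofReal ?_
    push_cast
    ring_nf

lemma tri (p q : ℕ) : zE p * zE q = Zp q p + Zp p q + zE (p+q) := by
  classical
  set F : ℕ × ℕ → ℝ≥0∞ := fun x => ENNReal.ofReal (1/(((x.1:ℝ)+1)^p * ((x.2:ℝ)+1)^q)) with hF
  have prod_eq : zE p * zE q = ∑' x : ℕ × ℕ, F x := by
    unfold zE
    rw [ENNReal.tsum_prod', ← ENNReal.tsum_mul_right]
    refine tsum_congr fun a => ?_
    rw [← ENNReal.tsum_mul_left]
    refine tsum_congr fun b => ?_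
    rw [← ENNReal.ofReal_mul (by positivity)]
    exact congrArg _ (by rw [one_div_mul_one_div])
  have hinj1 : Function.Injective (fun y : ℕ × ℕ => (y.1, y.1 + y.2 + 1)) := by
    intro a b hab
    simp only [Prod.mk.injEq] at hab
    exact Prod.ext hab.1 (by omega)
  have hinj2 : Function.Injective (fun y : ℕ × ℕ => (y.1 + y.2 + 1, y.1)) := by
    intro a b hab
    simp only [Prod.mk.injEq] at hab
    exact Prod.ext hab.2 (by omega)
  have hinj3 : Function.Injective (fun n : ℕ => ((n, n) : ℕ × ℕ)) := by
    intro a b hab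
    simpa using congrArg Prod.fst hab
  have huniv : (Set.univ : Set (ℕ × ℕ)) =
      (Set.range fun y : ℕ × ℕ => (y.1, y.1 + y.2 + 1)) ∪
      ((Set.range fun y : ℕ × ℕ => (y.1 + y.2 + 1, y.1)) ∪
       (Set.range fun n : ℕ => ((n, n) : ℕ × ℕ))) := by
    ext x
    simp only [Set.mem_univ, true_iff]
    rcases lt_trichotomy x.1 x.2 with hc|hc|hc
    · exact Or.inl ⟨(x.1, x.2 - x.1 - 1),
        Prod.ext rfl (show x.1 + (x.2 - x.1 - 1) + 1 = x.2 by omega)⟩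
    · exact Or.inr (Or.inr ⟨x.1, Prod.ext rfl (show x.1 = x.2 by omega)⟩)
    · exact Or.inr (Or.inl ⟨(x.2, x.1 - x.2 - 1),
        Prod.ext (show x.2 + (x.1 - x.2 - 1) + 1 = x.1 by omega) rfl⟩)
  have hd1 : Disjoint (Set.range fun y : ℕ × ℕ => ((y.1, y.1 + y.2 + 1) : ℕ × ℕ))
      ((Set.range fun y : ℕ × ℕ => ((y.1 + y.2 + 1, y.1) : ℕ × ℕ)) ∪
       (Set.range fun n : ℕ => ((n, n) : ℕ × ℕ))) := by
    rw [Set.disjoint_left]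
    rintro x ⟨y, hy⟩ hx
    have hy1 := congrArg Prod.fst hy
    have hy2 := congrArg Prod.snd hy
    simp at hy1 hy2
    rcases hx with ⟨z, hz⟩ | ⟨n, hn⟩
    · have hz1 := congrArg Prod.fst hz
      have hz2 := congrArg Prod.snd hz
      simp at hz1 hz2
      omega
    · have hn1 := congrArg Prod.fst hn
      have hn2 := congrArg Prod.snd hn
      simp at hn1 hn2
      omega
  have hd2 : Disjoint (Set.range fun y : ℕ × ℕ => ((y.1 + y.2 + 1, y.1) : ℕ × ℕ))
      (Set.range fun n : ℕ => ((n, n) : ℕ × ℕ)) := by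
    rw [Set.disjoint_left]
    rintro x ⟨y, hy⟩ ⟨n, hn⟩
    have hy1 := congrArg Prod.fst hy
    have hy2 := congrArg Prod.snd hy
    have hn1 := congrArg Prod.fst hn
    have hn2 := congrArg Prod.snd hn
    simp at hy1 hy2 hn1 hn2
    omega
  have step : ∑' x : ℕ × ℕ, F x
      = (∑' y : ℕ × ℕ, F (y.1, y.1 + y.2 + 1)) +
        ((∑' y : ℕ × ℕ, F (y.1 + y.2 + 1, y.1)) + (∑' n : ℕ, F (n, n))) := by
    rw [← tsum_univ F, huniv,
      Summable.tsum_union_disjoint hd1 ENNReal.summable ENNReal.summable,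
      Summable.tsum_union_disjoint hd2 ENNReal.summable ENNReal.summable,
      tsum_range F hinj1, tsum_range F hinj2, tsum_range F hinj3]
  have t1 : (∑' y : ℕ × ℕ, F (y.1, y.1 + y.2 + 1)) = Zp q p := by
    unfold Zp
    refine tsum_congr fun y => congrArg ENNReal.ofReal ?_
    push_cast
    ring_nf
  have t2 : (∑' y : ℕ × ℕ, F (y.1 + y.2 + 1, y.1)) = Zp p q := by
    unfold Zp
    refine tsum_congr fun y => congrArg ENNReal.ofReal ?_
    push_cast
    ring_nf
  have t3 : (∑' n : ℕ, F (n, n)) = zE (p+q) := by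
    unfold zE
    refine tsum_congr fun n => congrArg ENNReal.ofReal ?_
    rw [pow_add]
  rw [prod_eq, step, t1, t2, t3]
  ring

lemma Zp_ne_top (m : ℕ) (hm : 2 ≤ m) : Zp m 1 ≠ ∞ := by
  have hb : Zp m 1 ≤ ∑' j : ℕ, ENNReal.ofReal ((1/((j:ℝ)+1)) * (1/((j:ℝ)+1))) := by
    unfold Zp
    rw [ENNReal.tsum_prod']
    refine ENNReal.tsum_le_tsum fun j => ?_
    have hs := (tele2 j).mul_left (1/((j:ℝ)+1))
    calc ∑' k : ℕ, ENNReal.ofReal (1 / (((j:ℝ)+1)^1 * ((j:ℝ)+(k:ℝ)+2)^m))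
        ≤ ∑' k : ℕ, ENNReal.ofReal ((1/((j:ℝ)+1)) * (1/(((j:ℝ)+(k:ℝ)+1) * ((j:ℝ)+(k:ℝ)+2)))) := by
          refine ENNReal.tsum_le_tsum fun k => ENNReal.ofReal_le_ofReal ?_
          have h1 : (0:ℝ) < (j:ℝ)+1 := by positivity
          have h2 : (0:ℝ) < (j:ℝ)+(k:ℝ)+1 := by positivity
          have h3 : (0:ℝ) < (j:ℝ)+(k:ℝ)+2 := by positivity
          rw [one_div_mul_one_div]
          apply one_div_le_one_div_of_le (by positivity)
          rw [pow_one]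
          have hp : ((j:ℝ)+(k:ℝ)+1) * ((j:ℝ)+(k:ℝ)+2) ≤ ((j:ℝ)+(k:ℝ)+2)^m := by
            calc ((j:ℝ)+(k:ℝ)+1) * ((j:ℝ)+(k:ℝ)+2) ≤ ((j:ℝ)+(k:ℝ)+2)^2 := by nlinarith
              _ ≤ ((j:ℝ)+(k:ℝ)+2)^m := pow_le_pow_right₀ (by linarith) hm
          nlinarith [hp, h1]
      _ = ENNReal.ofReal ((1/((j:ℝ)+1)) * (1/((j:ℝ)+1))) := by
          rw [← hs.tsum_eq]
          exact (ENNReal.ofReal_tsum_of_nonneg (fun k => by positivity) hs.summable).symm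
  have hfin : (∑' j : ℕ, ENNReal.ofReal ((1/((j:ℝ)+1)) * (1/((j:ℝ)+1)))) ≠ ∞ := by
    have hsum : Summable (fun j : ℕ => (1/((j:ℝ)+1)) * (1/((j:ℝ)+1))) := by
      refine (summable_sz 2 le_rfl).congr fun j => ?_
      rw [one_div_mul_one_div]
      ring_nf
    rw [← ENNReal.ofReal_tsum_of_nonneg (fun j => by positivity) hsum]
    exact ENNReal.ofReal_ne_top
  exact ne_top_of_le_ne_top hfin hb

lemma mainE (M : ℕ) :
    2 * Lp (M+2) + ∑ n ∈ Icc 1 M, zE (M+2-n) * zE (n+1) = ((M:ℝ≥0∞)+4) * zE (M+3) := by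
  have h8 : Lp (M+2) = zE (M+3) + Zp (M+2) 1 := Lp_split (M+2)
  have hW : Wp (M+1) 1 = Wp 1 (M+1) + ∑ a ∈ Icc 1 M, Zp (M+2-a) (a+1) := by
    have := Wp_tele M M le_rfl
    rwa [show M+1-M = 1 by omega] at this
  have h4 : Wp 1 (M+1) = 2 * Zp (M+2) 1 := Wp_split M
  have hZH : Lp (M+2) = Wp (M+1) 1 := by rw [Lp_eq_ZH, Wp_eq_ZH]
  set S := ∑ a ∈ Icc 1 M, Zp (M+2-a) (a+1) with hS
  have key : zE (M+3) = Zp (M+2) 1 + S := by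
    have h1 : Zp (M+2) 1 + zE (M+3) = Zp (M+2) 1 + (Zp (M+2) 1 + S) := by
      calc Zp (M+2) 1 + zE (M+3) = Lp (M+2) := by rw [h8]; ring
        _ = 2 * Zp (M+2) 1 + S := by rw [hZH, hW, h4]
        _ = Zp (M+2) 1 + (Zp (M+2) 1 + S) := by ring
    exact (ENNReal.add_right_inj (Zp_ne_top (M+2) (by omega))).mp h1
  have reindex : ∑ n ∈ Icc 1 M, Zp (n+1) (M+2-n) = S := by
    rw [hS]
    refine Finset.sum_nbij' (i := fun n => M+1-n) (j := fun n => M+1-n) ?_ ?_ ?_ ?_ ?_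
    · intro a ha; simp only [Finset.mem_Icc] at *; omega
    · intro a ha; simp only [Finset.mem_Icc] at *; omega
    · intro a ha; simp only [Finset.mem_Icc] at ha; omega
    · intro a ha; simp only [Finset.mem_Icc] at ha; omega
    · intro a ha
      simp only [Finset.mem_Icc] at ha
      congr 1 <;> omega
  have hP : ∑ n ∈ Icc 1 M, zE (M+2-n) * zE (n+1)
      = S + S + (M:ℝ≥0∞) * zE (M+3) := by
    have e : ∀ n ∈ Icc 1 M, zE (M+2-n) * zE (n+1)
        = Zp (n+1) (M+2-n) + Zp (M+2-n) (n+1) + zE (M+3) := by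
      intro n hn
      rw [Finset.mem_Icc] at hn
      have := tri (M+2-n) (n+1)
      rwa [show (M+2-n)+(n+1) = M+3 by omega] at this
    rw [Finset.sum_congr rfl e, Finset.sum_add_distrib, Finset.sum_add_distrib, Finset.sum_const,
      Nat.card_Icc, reindex, ← hS]
    rw [show M+1-1 = M by omega, nsmul_eq_mul]
  rw [h8, hP, key]
  ring

/-! ### Conversion to ℝ and final theorem -/

lemma zeta_nonneg (s : ℕ) : 0 ≤ zeta s :=
  tsum_nonneg fun n => by positivity

lemma zE_eq (s : ℕ) (hs : 2 ≤ s) : zE s = ENNReal.ofReal (zeta s) := by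
  unfold zE zeta
  exact (ENNReal.ofReal_tsum_of_nonneg (fun n => by positivity) (summable_sz s hs)).symm

lemma zE_ne_top (s : ℕ) (hs : 2 ≤ s) : zE s ≠ ∞ := by
  rw [zE_eq s hs]; exact ENNReal.ofReal_ne_top

lemma zeta_toReal (s : ℕ) (hs : 2 ≤ s) : (zE s).toReal = zeta s := by
  rw [zE_eq s hs, ENNReal.toReal_ofReal (zeta_nonneg s)]

lemma hzeta_ofReal (m k : ℕ) (hm : 2 ≤ m) :
    ENNReal.ofReal (hzeta m (k+1) / ((k:ℝ)+1))
      = ∑' j : ℕ, ENNReal.ofReal (1 / (((k:ℝ)+1) * ((k:ℝ)+(j:ℝ)+1)^m)) := by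
  have hsum : Summable (fun j : ℕ => 1/((j:ℝ)+(k:ℝ)+1)^m) := summable_shift k m hm
  have hz : hzeta m (k+1) = ∑' j : ℕ, 1/((j:ℝ)+(k:ℝ)+1)^m := by
    unfold hzeta
    refine tsum_congr fun j => ?_
    push_cast
    ring_nf
  have hdiv : hzeta m (k+1) / ((k:ℝ)+1) = ∑' j : ℕ, (1/((j:ℝ)+(k:ℝ)+1)^m) / ((k:ℝ)+1) := by
    rw [hz, tsum_div_const]
  rw [hdiv, ENNReal.ofReal_tsum_of_nonneg (fun j => by positivity) (hsum.div_const _)]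
  refine tsum_congr fun j => congrArg ENNReal.ofReal ?_
  rw [div_div]
  congr 1
  ring

theorem stmt6 (m : ℕ) (hm : 2 ≤ m) :
    2 * ∑' k : ℕ, hzeta m (k + 1) / ((k : ℝ) + 1) =
      (m + 2) * zeta (m + 1) - ∑ n ∈ Finset.Icc 1 (m - 2), zeta (m - n) * zeta (n + 1) := by
  obtain ⟨M, rfl⟩ : ∃ M, m = M + 2 := ⟨m - 2, by omega⟩
  have hmain := mainE M
  -- identify the LHS with (Lp (M+2)).toReal
  have hGL : ∑' k : ℕ, (fun k : ℕ => ∑' j : ℕ, ENNReal.ofReal (1 / (((k:ℝ)+1) * ((k:ℝ)+(j:ℝ)+1)^(M+2)))) k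
      = Lp (M+2) := by
    unfold Lp
    rw [ENNReal.tsum_prod']
  have hLfin : Lp (M+2) ≠ ∞ := by
    intro htop
    have : (2 : ℝ≥0∞) * Lp (M+2) ≤ ((M:ℝ≥0∞)+4) * zE (M+3) := by
      rw [← hmain]; exact le_add_right le_rfl
    rw [htop] at this
    have h2 : (2 : ℝ≥0∞) * ∞ = ∞ := by simp
    rw [h2, top_le_iff] at this
    exact (ENNReal.mul_ne_top (by simp) (zE_ne_top (M+3) (by omega))) this
  have hofk : ∀ k : ℕ, ENNReal.ofReal (hzeta (M+2) (k+1) / ((k:ℝ)+1))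
      = ∑' j : ℕ, ENNReal.ofReal (1 / (((k:ℝ)+1) * ((k:ℝ)+(j:ℝ)+1)^(M+2))) :=
    fun k => hzeta_ofReal (M+2) k (by omega)
  have hsum_of : ∑' k : ℕ, ENNReal.ofReal (hzeta (M+2) (k+1) / ((k:ℝ)+1)) = Lp (M+2) := by
    rw [tsum_congr hofk]
    exact hGL
  have hnn : ∀ k : ℕ, 0 ≤ hzeta (M+2) (k+1) / ((k:ℝ)+1) := by
    intro k
    apply div_nonneg _ (by positivity)
    exact tsum_nonneg fun j => by positivity
  have hLHS : ∑' k : ℕ, hzeta (M+2) (k+1) / ((k:ℝ)+1) = (Lp (M+2)).toReal := by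
    calc ∑' k : ℕ, hzeta (M+2) (k+1) / ((k:ℝ)+1)
        = ∑' k : ℕ, (ENNReal.ofReal (hzeta (M+2) (k+1) / ((k:ℝ)+1))).toReal := by
          refine tsum_congr fun k => ?_
          rw [ENNReal.toReal_ofReal (hnn k)]
      _ = (∑' k : ℕ, ENNReal.ofReal (hzeta (M+2) (k+1) / ((k:ℝ)+1))).toReal := by
          rw [ENNReal.tsum_toReal_eq (fun k => ENNReal.ofReal_ne_top)]
      _ = (Lp (M+2)).toReal := by rw [hsum_of]
  -- take toReal of the main identity
  have hfin1 : (2 : ℝ≥0∞) * Lp (M+2) ≠ ∞ := ENNReal.mul_ne_top (by simp) hLfin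
  have hfin2 : ∀ n ∈ Icc 1 M, zE (M+2-n) * zE (n+1) ≠ ∞ := by
    intro n hn
    rw [Finset.mem_Icc] at hn
    exact ENNReal.mul_ne_top (zE_ne_top _ (by omega)) (zE_ne_top _ (by omega))
  have hfin3 : (∑ n ∈ Icc 1 M, zE (M+2-n) * zE (n+1)) ≠ ∞ := by
    rw [← lt_top_iff_ne_top]
    exact ENNReal.sum_lt_top.mpr fun n hn => lt_top_iff_ne_top.mpr (hfin2 n hn)
  have hB : (∑ n ∈ Icc 1 M, zE (M+2-n) * zE (n+1)).toReal
      = ∑ n ∈ Icc 1 M, zeta (M+2-n) * zeta (n+1) := by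
    rw [ENNReal.toReal_sum hfin2]
    refine Finset.sum_congr rfl fun n hn => ?_
    rw [Finset.mem_Icc] at hn
    rw [ENNReal.toReal_mul, zeta_toReal _ (by omega), zeta_toReal _ (by omega)]
  have htr2 : 2 * (Lp (M+2)).toReal + ∑ n ∈ Icc 1 M, zeta (M+2-n) * zeta (n+1)
      = ((M:ℝ)+4) * zeta (M+3) := by
    have h0 := congrArg ENNReal.toReal hmain
    rw [ENNReal.toReal_add hfin1 hfin3, ENNReal.toReal_mul, ENNReal.toReal_mul, hB,
      zeta_toReal _ (by omega : 2 ≤ M+3)] at h0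
    rw [ENNReal.toReal_add (ENNReal.natCast_ne_top M) (by simp)] at h0
    simpa using h0
  rw [hLHS, show M+2-2 = M by omega, show M+2+1 = M+3 by omega]
  push_cast
  linarith [htr2]
end

section
/- For integers 1 <= r < m, sum_{n=1}^infty h_n^(r)/n^m = (1/(r-1)!) * sum_{k=1}^r [r choose k]_1 * ( sum_{n=1}^infty H_n/n^{m-k+1} - H_{r-1} * zeta(m-k+1) + sum_{j=1}^{r-1} sum_{n=1}^infty 1/(n^{m-k+1}(n+j)) ), where [.]_1 are unsigned Stirling numbers of the first kind. -/
open scoped BigOperators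

lemma H_succ (n : ℕ) : H (n + 1) = H n + 1 / (n + 1) := by
  simp [H, Finset.sum_range_succ]

lemma h_closed (s : ℕ) : ∀ n : ℕ, h (s + 1) n =
    ((n + s).choose s : ℝ) * (H (n + s) - H s) := by
  induction s with
  | zero =>
    intro n
    simp only [h, Nat.add_zero, Nat.choose_zero_right, Nat.cast_one, H]
    induction n with
    | zero => simp
    | succ n ih => simp [Finset.sum_range_succ, ih, h]
  | succ s ih =>
    intro n
    induction n with
    | zero => simp [h]
    | succ n ihn =>
      have hrec : h (s + 2) (n + 1) = h (s + 2) n + h (s + 1) (n + 1) := by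
        show (∑ k ∈ Finset.range (n+1), h (s+1) (k+1)) = _
        rw [Finset.sum_range_succ]; rfl
      rw [hrec, ihn, ih (n + 1)]
      have e1 : n + 1 + (s + 1) = n + s + 1 + 1 := by ring
      have e2 : n + 1 + s = n + s + 1 := by ring
      have e3 : n + (s + 1) = n + s + 1 := by ring
      simp only [e1, e2, e3]
      rw [Nat.choose_succ_succ' (n + s + 1) s, H_succ (n + s + 1), H_succ s]
      have pas : (((n + s + 2).choose (s + 1) : ℕ) : ℝ)
          = ((n + s + 1).choose s : ℝ) + ((n + s + 1).choose (s + 1) : ℝ) := by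
        exact_mod_cast congrArg (Nat.cast (R := ℝ)) (Nat.choose_succ_succ' (n + s + 1) s)
      have key : ((n : ℝ) + s + 2) * ((n + s + 1).choose s : ℝ)
          = ((n + s + 2).choose (s + 1) : ℝ) * ((s : ℝ) + 1) := by
        exact_mod_cast congrArg (Nat.cast (R := ℝ)) (Nat.add_one_mul_choose_eq (n + s + 1) s)
      have key2 : ((n : ℝ) + s + 2) * ((n + s + 1).choose (s + 1) : ℝ)
          = (((n + s + 1).choose s : ℝ) + ((n + s + 1).choose (s + 1) : ℝ)) * ((n : ℝ) + 1) := by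
        linear_combination (-(s : ℝ) - 1) * pas - key
      have hs1 : ((s : ℝ) + 1) ≠ 0 := by positivity
      have hn2 : ((n : ℝ) + s + 2) ≠ 0 := by positivity
      push_cast
      field_simp
      linear_combination (-1 : ℝ) * key2

lemma stirling1_big_zero : ∀ r k, r < k → stirling1 r k = 0 := by
  intro r
  induction r with
  | zero =>
    intro k hk
    match k, hk with
    | k + 1, _ => rfl
  | succ r ih =>
    intro k hk
    match k, hk with
    | k + 1, hk =>
      show stirling1 r k + r * stirling1 r (k + 1) = 0
      rw [ih k (by omega), ih (k + 1) (by omega)]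
      ring

lemma mul_stirling1_zero (r : ℕ) : r * stirling1 r 0 = 0 := by
  match r with
  | 0 => rfl
  | r + 1 => show (r + 1) * 0 = 0; ring

lemma prod_stirling (r : ℕ) (x : ℝ) :
    ∏ i ∈ Finset.range r, (x + i) =
      ∑ k ∈ Finset.range (r + 1), (stirling1 r k : ℝ) * x ^ k := by
  induction r with
  | zero => simp [stirling1]
  | succ r ih =>
    rw [Finset.prod_range_succ, ih,
      Finset.sum_range_succ' (fun k => (stirling1 (r + 1) k : ℝ) * x ^ k) (r + 1)]
    have h0 : (stirling1 (r + 1) 0 : ℝ) = 0 := by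
      show ((0 : ℕ) : ℝ) = 0; simp
    have hrec : ∀ k, (stirling1 (r + 1) (k + 1) : ℝ)
        = stirling1 r k + r * stirling1 r (k + 1) := by
      intro k; show ((stirling1 r k + r * stirling1 r (k + 1) : ℕ) : ℝ) = _; push_cast; ring
    simp only [hrec, h0, zero_mul, add_zero]
    have expand : ∑ k ∈ Finset.range (r + 1),
        ((stirling1 r k : ℝ) + r * stirling1 r (k + 1)) * x ^ (k + 1)
        = ∑ k ∈ Finset.range (r + 1), (stirling1 r k : ℝ) * x ^ (k + 1)
          + ∑ k ∈ Finset.range (r + 1), (r : ℝ) * stirling1 r (k + 1) * x ^ (k + 1) := by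
      rw [← Finset.sum_add_distrib]
      exact Finset.sum_congr rfl fun k _ => by ring
    rw [expand]
    have e1 : (∑ k ∈ Finset.range (r + 1), (stirling1 r k : ℝ) * x ^ k) * (x + r)
        = ∑ k ∈ Finset.range (r + 1), (stirling1 r k : ℝ) * x ^ (k + 1)
          + (r : ℝ) * ∑ k ∈ Finset.range (r + 1), (stirling1 r k : ℝ) * x ^ k := by
      rw [mul_add]
      congr 1
      · rw [Finset.sum_mul]
        exact Finset.sum_congr rfl fun k _ => by ring
      · rw [Finset.sum_mul, Finset.mul_sum]
        exact Finset.sum_congr rfl fun k _ => by ring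
    rw [e1]
    congr 1
    have e2 : ∑ k ∈ Finset.range (r + 1), (stirling1 r k : ℝ) * x ^ k
        = (∑ k ∈ Finset.range r, (stirling1 r (k + 1) : ℝ) * x ^ (k + 1)) + stirling1 r 0 := by
      rw [Finset.sum_range_succ' (fun k => (stirling1 r k : ℝ) * x ^ k) r]
      simp
    have e3 : ∑ k ∈ Finset.range (r + 1), (r : ℝ) * stirling1 r (k + 1) * x ^ (k + 1)
        = (r : ℝ) * ∑ k ∈ Finset.range r, (stirling1 r (k + 1) : ℝ) * x ^ (k + 1) := by
      rw [Finset.sum_range_succ, stirling1_big_zero r (r + 1) (by omega)]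
      rw [Finset.mul_sum]
      simp only [Nat.cast_zero, zero_mul, mul_zero, add_zero]
      exact Finset.sum_congr rfl fun k _ => by ring
    rw [e2, e3, mul_add]
    have : (r : ℝ) * stirling1 r 0 = 0 := by exact_mod_cast congrArg (Nat.cast (R := ℝ)) (mul_stirling1_zero r)
    rw [this, add_zero]

lemma H_add (a t : ℕ) : H (a + t) = H a + ∑ j ∈ Finset.Icc 1 t, (1 : ℝ) / ((a : ℝ) + j) := by
  induction t with
  | zero => simp
  | succ t ih =>
    have e : a + (t + 1) = (a + t) + 1 := by ring
    rw [e, H_succ, ih, Finset.sum_Icc_succ_top (by omega : 1 ≤ t + 1)]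
    push_cast
    ring

lemma prod_choose (s : ℕ) : ∀ n : ℕ, (∏ i ∈ Finset.range s, (n + 1 + i)) = s.factorial * (n + s).choose s := by
  induction s with
  | zero => intro n; simp
  | succ s ih =>
    intro n
    rw [Finset.prod_range_succ, ih n]
    have key := Nat.add_one_mul_choose_eq (n + s) s
    have e : n + 1 + s = (n + s).succ := by omega
    have e2 : n + (s + 1) = (n + s) + 1 := by omega
    rw [e, e2, Nat.factorial_succ]
    simp only [Nat.succ_eq_add_one] at key ⊢
    calc s.factorial * (n + s).choose s * (n + s + 1)
        = s.factorial * ((n + s + 1) * (n + s).choose s) := by ring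
      _ = s.factorial * ((n + s + 1).choose (s + 1) * (s + 1)) := by rw [key]
      _ = (s + 1) * s.factorial * (n + s + 1).choose (s + 1) := by ring

lemma key_x (s n : ℕ) :
    (s.factorial : ℝ) * ((n + 1 + s).choose s : ℝ) * ((n : ℝ) + 1)
      = ∑ k ∈ Finset.range (s + 2), (stirling1 (s + 1) k : ℝ) * ((n : ℝ) + 1) ^ k := by
  rw [show s + 2 = (s + 1) + 1 from rfl, ← prod_stirling (s + 1) ((n : ℝ) + 1),
    Finset.prod_range_succ']
  have : ∀ i ∈ Finset.range s, ((n : ℝ) + 1) + ((i : ℕ) + 1 : ℕ) = ((n + 1 + 1 + i : ℕ) : ℝ) := by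
    intro i _; push_cast; ring
  rw [Finset.prod_congr rfl this, ← Nat.cast_prod, prod_choose s (n + 1)]
  push_cast
  ring_nf

lemma pointwise (s m : ℕ) (hm : s + 1 < m) (n : ℕ) :
    h (s + 1) (n + 1) / ((n : ℝ) + 1) ^ m
      = (1 / (s.factorial : ℝ)) *
        ∑ k ∈ Finset.Icc 1 (s + 1),
          (stirling1 (s + 1) k : ℝ) *
            (H (n + 1) / ((n : ℝ) + 1) ^ (m - k + 1)
              - H s * (1 / ((n : ℝ) + 1) ^ (m - k + 1))
              + ∑ j ∈ Finset.Icc 1 s,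
                  (1 : ℝ) / (((n : ℝ) + 1) ^ (m - k + 1) * ((n : ℝ) + 1 + j))) := by
  have hx : ((n : ℝ) + 1) ≠ 0 := by positivity
  set x : ℝ := (n : ℝ) + 1 with hxdef
  have hS : (s.factorial : ℝ) * ((n + 1 + s).choose s : ℝ) / x ^ m
      = ∑ k ∈ Finset.Icc 1 (s + 1), (stirling1 (s + 1) k : ℝ) / x ^ (m - k + 1) := by
    have hx1 : (s.factorial : ℝ) * ((n + 1 + s).choose s : ℝ) / x ^ m
        = (∑ k ∈ Finset.range (s + 2), (stirling1 (s + 1) k : ℝ) * x ^ k) / x ^ (m + 1) := by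
      rw [← key_x s n, pow_succ]
      field_simp
      ring
    rw [hx1, Finset.sum_div,
      Finset.sum_range_succ' (fun k => (stirling1 (s + 1) k : ℝ) * x ^ k / x ^ (m + 1)) (s + 1)]
    have h0 : (stirling1 (s + 1) 0 : ℝ) * x ^ 0 / x ^ (m + 1) = 0 := by
      show ((0 : ℕ) : ℝ) * x ^ 0 / x ^ (m + 1) = 0; simp
    rw [h0, add_zero, ← Finset.Ico_add_one_right_eq_Icc, Finset.sum_Ico_eq_sum_range]
    simp only [show s + 1 + 1 - 1 = s + 1 from rfl]
    refine Finset.sum_congr rfl fun i hi => ?_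
    have hi' : i < s + 1 := Finset.mem_range.mp hi
    rw [Nat.add_comm 1 i]
    have he : m - (i + 1) + 1 = m - i := by omega
    have hpow : x ^ (m + 1) = x ^ (m - i) * x ^ (1 + i) := by
      rw [← pow_add]; congr 1; omega
    rw [he, hpow]
    field_simp
    ring
  rw [h_closed s (n + 1), H_add (n + 1) s]
  have hcast : ∀ j ∈ Finset.Icc 1 s, (1 : ℝ) / (((n + 1 : ℕ) : ℝ) + j) = 1 / (x + j) := by
    intro j _; rw [hxdef]; push_cast; ring_nf
  rw [Finset.sum_congr rfl hcast]
  set D : ℝ := H (n + 1) - H s + ∑ j ∈ Finset.Icc 1 s, (1 : ℝ) / (x + j) with hD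
  have hterm : ∀ k ∈ Finset.Icc 1 (s + 1),
      (stirling1 (s + 1) k : ℝ) *
        (H (n + 1) / x ^ (m - k + 1) - H s * (1 / x ^ (m - k + 1))
          + ∑ j ∈ Finset.Icc 1 s, (1 : ℝ) / (x ^ (m - k + 1) * (x + j)))
      = ((stirling1 (s + 1) k : ℝ) / x ^ (m - k + 1)) * D := by
    intro k _
    have hsum : ∑ j ∈ Finset.Icc 1 s, (1 : ℝ) / (x ^ (m - k + 1) * (x + j))
        = (1 / x ^ (m - k + 1)) * ∑ j ∈ Finset.Icc 1 s, (1 : ℝ) / (x + j) := by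
      rw [Finset.mul_sum]
      refine Finset.sum_congr rfl fun j _ => ?_
      rw [div_mul_div_comm, one_mul]
    rw [hsum, hD]
    ring
  rw [Finset.sum_congr rfl hterm, ← Finset.sum_mul, ← hS]
  have hf : (s.factorial : ℝ) ≠ 0 := by positivity
  have e : H (n + 1) + ∑ j ∈ Finset.Icc 1 s, (1:ℝ) / (x + j) - H s = D := by rw [hD]; ring
  rw [e]
  field_simp

lemma H_nonneg (n : ℕ) : 0 ≤ H n :=
  Finset.sum_nonneg fun k _ => by positivity

lemma sum1 (p : ℕ) (hp : 2 ≤ p) : Summable (fun n : ℕ => (1 : ℝ) / ((n : ℝ) + 1) ^ p) := by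
  have h := (Real.summable_one_div_nat_pow (p := p)).2 hp
  have h2 := (summable_nat_add_iff 1).2 h
  simpa using h2

lemma Hbound : ∀ n : ℕ, H n ≤ 2 * Real.sqrt n := by
  intro n
  induction n with
  | zero => simp [H]
  | succ n ih =>
    rw [H_succ]
    have ha : Real.sqrt n ≥ 0 := Real.sqrt_nonneg n
    have hb : Real.sqrt (n + 1) ≥ 0 := Real.sqrt_nonneg _
    have ha2 : Real.sqrt n ^ 2 = n := Real.sq_sqrt (by positivity)
    have hb2 : Real.sqrt (n + 1) ^ 2 = (n : ℝ) + 1 := by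
      rw [Real.sq_sqrt (by positivity)]
    have hble : Real.sqrt ((n : ℝ) + 1) ≤ (n : ℝ) + 1 := by
      nlinarith [hb2, hb, sq_nonneg (Real.sqrt ((n : ℝ) + 1) - 1), Nat.cast_nonneg (α := ℝ) n]
    have hba : Real.sqrt (n : ℝ) ≤ Real.sqrt ((n : ℝ) + 1) := Real.sqrt_le_sqrt (by linarith)
    have key : 1 / ((n : ℝ) + 1) ≤ 2 * (Real.sqrt (n + 1) - Real.sqrt n) := by
      rw [div_le_iff₀ (by positivity)]
      have hsum : Real.sqrt (n : ℝ) + Real.sqrt ((n : ℝ) + 1) ≤ 2 * ((n : ℝ) + 1) := by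
        linarith [hba, hble]
      nlinarith [ha, hb, ha2, hb2, hble, hba,
        mul_nonneg (sub_nonneg.2 hba) (sub_nonneg.2 hsum)]
    have : (((n : ℕ) + 1 : ℕ) : ℝ) = (n : ℝ) + 1 := by push_cast; ring
    rw [this] at *
    nlinarith [ih, key]

lemma sumH (p : ℕ) (hp : 2 ≤ p) : Summable (fun n : ℕ => H (n + 1) / ((n : ℝ) + 1) ^ p) := by
  have hg : Summable (fun n : ℕ => 2 * ((((n : ℝ) + 1) ^ (3 / 2 : ℝ))⁻¹)) := by
    have h := (Real.summable_nat_rpow_inv (p := (3 / 2 : ℝ))).2 (by norm_num)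
    have h2 := (summable_nat_add_iff 1).2 h
    have h3 : ∀ n : ℕ, ((((n + 1 : ℕ) : ℝ)) ^ (3 / 2 : ℝ))⁻¹ = (((n : ℝ) + 1) ^ (3 / 2 : ℝ))⁻¹ := by
      intro n; push_cast; ring_nf
    exact (summable_congr fun n => by rw [h3 n]).1 h2 |>.mul_left 2
  refine Summable.of_nonneg_of_le (fun n => div_nonneg (H_nonneg _) (by positivity)) (fun n => ?_) hg
  set x : ℝ := (n : ℝ) + 1 with hxdef
  have hx1 : (1 : ℝ) ≤ x := by
    rw [hxdef]; have := Nat.cast_nonneg (α := ℝ) n; linarith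
  have hx0 : (0 : ℝ) < x := by linarith
  have hHb : H (n + 1) ≤ 2 * Real.sqrt x := by
    have := Hbound (n + 1)
    have e : (((n + 1 : ℕ)) : ℝ) = x := by push_cast [hxdef]; ring
    rwa [e] at this
  have hxp : x ^ 2 ≤ x ^ p := pow_le_pow_right₀ hx1 hp
  have step1 : H (n + 1) / x ^ p ≤ 2 * Real.sqrt x / x ^ 2 :=
    div_le_div₀ (by positivity) hHb (by positivity) hxp
  have step2 : 2 * Real.sqrt x / x ^ 2 = 2 * ((x ^ (3 / 2 : ℝ))⁻¹) := by
    rw [Real.sqrt_eq_rpow]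
    rw [show (x : ℝ) ^ 2 = x ^ (2 : ℝ) by rw [← Real.rpow_natCast x 2]; norm_num]
    rw [mul_div_assoc, ← Real.rpow_sub hx0]
    norm_num [Real.rpow_neg (le_of_lt hx0)]
  rw [← step2]
  exact step1

lemma sumJ (p : ℕ) (hp : 2 ≤ p) (j : ℕ) :
    Summable (fun n : ℕ => (1 : ℝ) / (((n : ℝ) + 1) ^ p * ((n : ℝ) + 1 + j))) := by
  refine Summable.of_nonneg_of_le (fun n => by positivity) (fun n => ?_) (sum1 p hp)
  have h1 : (1 : ℝ) ≤ (n : ℝ) + 1 + j := by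
    have := Nat.cast_nonneg (α := ℝ) n; have := Nat.cast_nonneg (α := ℝ) j; linarith
  have hxp : (0 : ℝ) < ((n : ℝ) + 1) ^ p := by positivity
  rw [div_le_div_iff₀ (by positivity) hxp]
  nlinarith [hxp]

theorem stmt10 (r m : ℕ) (hr : 1 ≤ r) (hm : r < m) :
    ∑' n : ℕ, h r (n + 1) / ((n : ℝ) + 1) ^ m =
      (1 / ((r - 1).factorial : ℝ)) *
        ∑ k ∈ Finset.Icc 1 r,
          (stirling1 r k : ℝ) *
            (zetaH (m - k + 1) - H (r - 1) * zeta (m - k + 1) +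
              ∑ j ∈ Finset.Icc 1 (r - 1),
                ∑' n : ℕ, (1 : ℝ) / (((n : ℝ) + 1) ^ (m - k + 1) * ((n : ℝ) + 1 + j))) := by
  obtain ⟨s, rfl⟩ : ∃ s, r = s + 1 := ⟨r - 1, by omega⟩
  simp only [Nat.add_sub_cancel]
  rw [tsum_congr (pointwise s m hm)]
  rw [tsum_mul_left]
  congr 1
  have hsk : ∀ k ∈ Finset.Icc 1 (s + 1), 2 ≤ m - k + 1 := by
    intro k hk
    have := Finset.mem_Icc.mp hk
    omega
  have hsummand : ∀ k ∈ Finset.Icc 1 (s + 1),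
      Summable (fun n : ℕ =>
        (stirling1 (s + 1) k : ℝ) *
          (H (n + 1) / ((n : ℝ) + 1) ^ (m - k + 1)
            - H s * (1 / ((n : ℝ) + 1) ^ (m - k + 1))
            + ∑ j ∈ Finset.Icc 1 s,
                (1 : ℝ) / (((n : ℝ) + 1) ^ (m - k + 1) * ((n : ℝ) + 1 + j)))) := by
    intro k hk
    have hp := hsk k hk
    exact (((sumH _ hp).sub ((sum1 _ hp).mul_left (H s))).add
      (summable_sum fun j _ => sumJ _ hp j)).mul_left _
  rw [Summable.tsum_finsetSum hsummand]
  refine Finset.sum_congr rfl fun k hk => ?_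
  have hp := hsk k hk
  rw [tsum_mul_left]
  congr 1
  rw [Summable.tsum_add ((sumH _ hp).sub ((sum1 _ hp).mul_left (H s)))
      (summable_sum fun j _ => sumJ _ hp j),
    Summable.tsum_sub (sumH _ hp) ((sum1 _ hp).mul_left (H s)),
    tsum_mul_left, Summable.tsum_finsetSum (fun j _ => sumJ _ hp j)]
  rfl
end

section
/- For every nonnegative integer r, sum_{n=1}^infty h_n^(r) / ((n+1)(n+2)...(n+r+1)) = 1/r!, where h_n^(0) = 1/n and h_n^(r) = sum_{k=1}^n h_k^(r-1). -/
open scoped BigOperators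

open Filter Finset

/-- Partial sums of the series in question. -/
noncomputable def S (r N : ℕ) : ℝ :=
  ∑ n ∈ Finset.range N, h r (n + 1) / ∏ i ∈ Finset.range (r + 1), ((n : ℝ) + 2 + i)

lemma h_nonneg : ∀ r n, 0 ≤ h r n
  | 0, n => by simp only [h]; positivity
  | r + 1, n => Finset.sum_nonneg fun k _ => h_nonneg r (k + 1)

lemma h_succ (r n : ℕ) : h (r + 1) (n + 1) = h (r + 1) n + h r (n + 1) := by
  simp [h, Finset.sum_range_succ]

lemma h_zero (r : ℕ) : h (r + 1) 0 = 0 := by simp [h]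

lemma harmonic_le (n : ℕ) : h 1 n ≤ 2 * Real.sqrt n := by
  induction n with
  | zero => simp [h]
  | succ n ih =>
    have hs : h 1 (n + 1) = h 1 n + 1 / ((n : ℝ) + 1) := by
      rw [h_succ]; simp [h]
    have key : 1 / ((n : ℝ) + 1) ≤ 2 * Real.sqrt (n + 1) - 2 * Real.sqrt n := by
      have h1 : Real.sqrt (n + 1) ^ 2 = (n : ℝ) + 1 := Real.sq_sqrt (by positivity)
      have h2 : Real.sqrt (n : ℝ) ^ 2 = (n : ℝ) := Real.sq_sqrt (by positivity)
      have h3 : (0 : ℝ) ≤ Real.sqrt n := Real.sqrt_nonneg _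
      have h4 : (1 : ℝ) ≤ Real.sqrt (n + 1) :=
        Real.le_sqrt_of_sq_le (by nlinarith)
      have hba : Real.sqrt (n : ℝ) ≤ Real.sqrt ((n : ℝ) + 1) := by nlinarith
      have hab : (Real.sqrt ((n:ℝ)+1) - Real.sqrt (n:ℝ)) * (Real.sqrt ((n:ℝ)+1) + Real.sqrt (n:ℝ)) = 1 := by
        nlinarith
      rw [div_le_iff₀ (by positivity)]
      nlinarith [hab, hba, h4, h3,
        mul_le_mul_of_nonneg_right
          (show Real.sqrt ((n:ℝ)+1) + Real.sqrt (n:ℝ) ≤ 2 * Real.sqrt ((n:ℝ)+1) by linarith)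
          (show 0 ≤ Real.sqrt ((n:ℝ)+1) - Real.sqrt (n:ℝ) by linarith)]
    have : ((n : ℕ) + 1 : ℝ) = (n : ℝ) + 1 := by push_cast; ring
    rw [hs]
    push_cast
    linarith
  
lemma h_le (r : ℕ) : ∀ n : ℕ, h (r + 1) n ≤ 2 * Real.sqrt n * (n : ℝ) ^ r := by
  induction r with
  | zero => intro n; simpa using harmonic_le n
  | succ r ih =>
    intro n
    have : h (r + 2) n = ∑ k ∈ Finset.range n, h (r + 1) (k + 1) := rfl
    rw [this]
    calc ∑ k ∈ Finset.range n, h (r + 1) (k + 1)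
        ≤ ∑ k ∈ Finset.range n, 2 * Real.sqrt n * (n : ℝ) ^ r := by
          apply Finset.sum_le_sum
          intro k hk
          have hkn : (k : ℕ) + 1 ≤ n := Finset.mem_range.mp hk
          have hkn' : ((k : ℝ) + 1) ≤ (n : ℝ) := by exact_mod_cast hkn
          calc h (r + 1) (k + 1) ≤ 2 * Real.sqrt (k + 1) * ((k : ℝ) + 1) ^ r := by
                simpa using ih (k + 1)
            _ ≤ 2 * Real.sqrt n * (n : ℝ) ^ r := by
                apply mul_le_mul
                · have := Real.sqrt_le_sqrt hkn'
                  push_cast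
                  linarith
                · exact pow_le_pow_left₀ (by positivity) hkn' r
                · positivity
                · positivity
      _ = 2 * Real.sqrt n * (n : ℝ) ^ (r + 1) := by
          rw [Finset.sum_const, Finset.card_range]
          push_cast
          ring

lemma prod_pos (N r : ℕ) : 0 < ∏ i ∈ Finset.range r, ((N : ℝ) + 2 + i) := by
  apply Finset.prod_pos
  intro i _
  positivity

/-- The key recursion for partial sums. -/
lemma S_rec (s N : ℕ) :
    ((s : ℝ) + 1) * S (s + 1) N =
      S s N - h (s + 1) N / ∏ i ∈ Finset.range (s + 1), ((N : ℝ) + 2 + i) := by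
  induction N with
  | zero => simp [S, h_zero]
  | succ N ih =>
    have hS1 : S (s + 1) (N + 1) =
        S (s + 1) N + h (s + 1) (N + 1) / ∏ i ∈ Finset.range (s + 2), ((N : ℝ) + 2 + i) := by
      rw [S, Finset.sum_range_succ]; rfl
    have hS2 : S s (N + 1) =
        S s N + h s (N + 1) / ∏ i ∈ Finset.range (s + 1), ((N : ℝ) + 2 + i) := by
      rw [S, Finset.sum_range_succ]; rfl
    set P2 : ℝ := ∏ i ∈ Finset.range (s + 2), ((N : ℝ) + 2 + i) with hP2
    set x : ℝ := ∏ i ∈ Finset.range (s + 1), ((N : ℝ) + 2 + i) with hx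
    have hA' : (∏ i ∈ Finset.range (s + 1), (((N + 1 : ℕ) : ℝ) + 2 + i)) =
        ∏ i ∈ Finset.range (s + 1), ((N : ℝ) + 3 + i) := by
      apply Finset.prod_congr rfl
      intro i _
      push_cast
      ring
    set A2 : ℝ := ∏ i ∈ Finset.range (s + 1), ((N : ℝ) + 3 + i) with hA2
    have hsplit1 : P2 = x * ((N : ℝ) + 2 + (s + 1)) := by
      rw [hP2, hx, Finset.prod_range_succ]
      push_cast
      ring
    have hsplit2 : P2 = ((N : ℝ) + 2) * A2 := by
      rw [hP2, hA2, Finset.prod_range_succ']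
      have h5 : ∀ i ∈ Finset.range (s + 1),
          ((N : ℝ) + 2 + ((i + 1 : ℕ) : ℝ)) = ((N : ℝ) + 3 + i) := by
        intro i _; push_cast; ring
      rw [Finset.prod_congr rfl h5]
      push_cast
      ring
    have hxpos : 0 < x := prod_pos N (s + 1)
    have hA2pos : 0 < A2 := by
      apply Finset.prod_pos; intro i _; positivity
    have hP2pos : 0 < P2 := by
      apply Finset.prod_pos; intro i _; positivity
    have hrec : h (s + 1) (N + 1) = h (s + 1) N + h s (N + 1) := h_succ s N
    rw [hS1, hS2, hA']
    rw [show S (s+1) (N+1) = S (s+1) (N+1) from rfl] at *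
    -- goal: (s+1)*(S (s+1) N + h(s+1)(N+1)/P2) = S s N + h s (N+1)/x - h(s+1)(N+1)/A2
    rw [mul_add, ih, hrec]
    have key : ((s : ℝ) + 1) * (x * A2) = (A2 - x) * P2 := by
      have e1 : A2 * P2 = A2 * (x * ((N : ℝ) + 2 + (s + 1))) := by rw [← hsplit1]
      have e2 : x * P2 = x * (((N : ℝ) + 2) * A2) := by rw [← hsplit2]
      nlinarith [e1, e2]
    have main : ((s : ℝ) + 1) * ((h (s + 1) N + h s (N + 1)) / P2) =
        (h (s + 1) N + h s (N + 1)) / x - (h (s + 1) N + h s (N + 1)) / A2 := by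
      rw [div_sub_div _ _ (ne_of_gt hxpos) (ne_of_gt hA2pos)]
      rw [← mul_div_assoc, div_eq_div_iff (ne_of_gt hP2pos) (by positivity)]
      linear_combination (h (s + 1) N + h s (N + 1)) * key
    rw [main]
    ring

lemma tail_tendsto (r : ℕ) :
    Tendsto (fun N : ℕ => h (r + 1) N / ∏ i ∈ Finset.range (r + 1), ((N : ℝ) + 2 + i))
      atTop (nhds 0) := by
  have sqrt_tendsto : Tendsto (fun n : ℕ => Real.sqrt n) atTop atTop := by
    rw [Filter.tendsto_atTop_atTop]
    intro b
    refine ⟨⌈b ^ 2⌉₊, fun a ha => ?_⟩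
    have h1 : (b ^ 2 : ℝ) ≤ a := le_trans (Nat.le_ceil _) (by exact_mod_cast ha)
    exact Real.le_sqrt_of_sq_le h1
  have upper : Tendsto (fun n : ℕ => 2 / Real.sqrt n) atTop (nhds 0) := by
    simpa using Filter.Tendsto.div_atTop (tendsto_const_nhds (x := (2:ℝ))) sqrt_tendsto
  apply squeeze_zero_norm' _ upper
  filter_upwards [Filter.eventually_ge_atTop 1] with N hN
  have hNpos : (0 : ℝ) < N := by exact_mod_cast hN
  have hPpos : 0 < ∏ i ∈ Finset.range (r + 1), ((N : ℝ) + 2 + i) := prod_pos N (r + 1)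
  have hnn : 0 ≤ h (r + 1) N / ∏ i ∈ Finset.range (r + 1), ((N : ℝ) + 2 + i) :=
    div_nonneg (h_nonneg _ _) (le_of_lt hPpos)
  rw [Real.norm_of_nonneg hnn]
  have hP : (N : ℝ) ^ (r + 1) ≤ ∏ i ∈ Finset.range (r + 1), ((N : ℝ) + 2 + i) := by
    calc (N : ℝ) ^ (r + 1) = ∏ _i ∈ Finset.range (r + 1), (N : ℝ) := by
          rw [Finset.prod_const, Finset.card_range]
      _ ≤ ∏ i ∈ Finset.range (r + 1), ((N : ℝ) + 2 + i) := by
          apply Finset.prod_le_prod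
          · intro i _; positivity
          · intro i _
            have : (0:ℝ) ≤ (i:ℝ) := by positivity
            linarith
  have hsq : Real.sqrt N * Real.sqrt N = (N : ℝ) := Real.mul_self_sqrt (by positivity)
  have hsqpos : 0 < Real.sqrt N := Real.sqrt_pos.mpr hNpos
  rw [div_le_div_iff₀ hPpos hsqpos]
  calc h (r + 1) N * Real.sqrt N ≤ (2 * Real.sqrt N * (N : ℝ) ^ r) * Real.sqrt N := by
        apply mul_le_mul_of_nonneg_right (h_le r N) (Real.sqrt_nonneg _)
    _ = 2 * (Real.sqrt N * Real.sqrt N) * (N : ℝ) ^ r := by ring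
    _ = 2 * ((N : ℝ) * (N : ℝ) ^ r) := by rw [hsq]; ring
    _ = 2 * (N : ℝ) ^ (r + 1) := by ring
    _ ≤ 2 * ∏ i ∈ Finset.range (r + 1), ((N : ℝ) + 2 + i) := by linarith

lemma S_tendsto : ∀ r : ℕ, Tendsto (fun N => S r N) atTop (nhds (1 / (r.factorial : ℝ)))
  | 0 => by
    have hform : ∀ N : ℕ, S 0 N = 1 - 1 / ((N : ℝ) + 1) := by
      intro N
      induction N with
      | zero => simp [S]
      | succ N ih =>
        rw [S, Finset.sum_range_succ, ← S, ih]
        have h1 : h 0 (N + 1) = 1 / ((N : ℝ) + 1) := by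
          simp only [h]; push_cast; ring
        have h2 : (∏ i ∈ Finset.range 1, ((N : ℝ) + 2 + i)) = (N : ℝ) + 2 := by simp
        rw [h1, h2]
        have hN1 : ((N : ℝ) + 1) ≠ 0 := by positivity
        have hN2 : ((N : ℝ) + 2) ≠ 0 := by positivity
        push_cast
        field_simp
        ring
    simp only [hform]
    have : Tendsto (fun N : ℕ => 1 / ((N : ℝ) + 1)) atTop (nhds 0) := by
      apply Filter.Tendsto.div_atTop (tendsto_const_nhds (x := (1:ℝ)))
      apply Filter.tendsto_atTop_add_const_right
      exact tendsto_natCast_atTop_atTop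
    have := (tendsto_const_nhds (x := (1:ℝ))).sub this
    simpa using this
  | (r + 1) => by
    have ih := S_tendsto r
    have htail := tail_tendsto r
    have hcomb : Tendsto
        (fun N => (S r N - h (r + 1) N / ∏ i ∈ Finset.range (r + 1), ((N : ℝ) + 2 + i))
          / ((r : ℝ) + 1)) atTop (nhds ((1 / (r.factorial : ℝ) - 0) / ((r : ℝ) + 1))) := by
      exact (ih.sub htail).div_const _
    have heq : ∀ N, S (r + 1) N =
        (S r N - h (r + 1) N / ∏ i ∈ Finset.range (r + 1), ((N : ℝ) + 2 + i))
          / ((r : ℝ) + 1) := by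
      intro N
      have := S_rec r N
      field_simp at this ⊢
      linarith [this]
    have hval : (1 / (r.factorial : ℝ) - 0) / ((r : ℝ) + 1) = 1 / ((r + 1).factorial : ℝ) := by
      rw [Nat.factorial_succ]
      push_cast
      have h1 : (r.factorial : ℝ) ≠ 0 := by exact_mod_cast r.factorial_ne_zero
      field_simp
      ring
    rw [← hval]
    simpa only [← heq] using hcomb

theorem stmt15 (r : ℕ) :
    ∑' n : ℕ, h r (n + 1) / ∏ i ∈ Finset.range (r + 1), ((n : ℝ) + 2 + i) =
      1 / (r.factorial : ℝ) := by
  have hnn : ∀ n : ℕ, 0 ≤ h r (n + 1) / ∏ i ∈ Finset.range (r + 1), ((n : ℝ) + 2 + i) := by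
    intro n
    exact div_nonneg (h_nonneg _ _) (le_of_lt (prod_pos n (r + 1)))
  have : HasSum (fun n : ℕ => h r (n + 1) / ∏ i ∈ Finset.range (r + 1), ((n : ℝ) + 2 + i))
      (1 / (r.factorial : ℝ)) := by
    rw [hasSum_iff_tendsto_nat_of_nonneg hnn]
    exact S_tendsto r
  exact this.tsum_eq
end
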